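/- Let (X, ≤) be a countable lower 1-transitive linear order and let s be an invariant partition of X (an equivalence relation whose classes are convex and which is preserved by every order isomorphism between initial segments). Then the quotient X/s admits a linear order making the quotient map monotone, and with this induced order X/s is a countable lower 1-transitive linear order. -/

import Mathlib

/-- A linear order is lower 1-transitive if any two of its initial segments
are order-isomorphic. -/
def LowerOneTransitive (X : Type*) [LinearOrder X] : Prop :=
  ∀ a b : X, Nonempty (Set.Iic a ≃o Set.Iic b)

/-- An invariant partition: an equivalence relation with convex classes which is
preserved by every order isomorphism between initial segments. -/
def IsInvariantPartition {X : Type*} [LinearOrder X] (s : Setoid X) : Prop :=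
  (∀ x y z : X, s.r x y → x ≤ z → z ≤ y → s.r z x) ∧
  (∀ (a b : X) (f : Set.Iic a ≃o Set.Iic b) (x y : Set.Iic a),
    s.r (x : X) (y : X) ↔ s.r ((f x : X)) ((f y : X)))

attribute [-instance] Quotient.instPreorder

/-- The quotient of a countable lower 1-transitive linear order by an invariant
partition admits a linear order making the quotient map monotone, and with it the
quotient is a countable lower 1-transitive linear order. -/
theorem quotient_lowerOneTransitive {X : Type*} [LinearOrder X] [Countable X]
    (hX : LowerOneTransitive X) (s : Setoid X) (hs : IsInvariantPartition s) :
    ∃ li : LinearOrder (Quotient s),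
      (@Monotone X (Quotient s) _ li.toPreorder (Quotient.mk s)) ∧
      Countable (Quotient s) ∧
      @LowerOneTransitive (Quotient s) li := by
  classical
  have conv := hs.1
  have inv := hs.2
  have key : ∀ x x' y y' : X, s.r x x' → s.r y y' →
      (x ≤ y ∨ s.r x y) → (x' ≤ y' ∨ s.r x' y') := by
    intro x x' y y' hx hy h
    by_cases hxy : s.r x' y'
    · exact Or.inr hxy
    · left
      by_contra hle
      push_neg at hle
      apply hxy
      rcases h with h | h
      · rcases le_or_gt x' y with h1 | h1
        · exact conv y' y x' (s.iseqv.symm hy) hle.le h1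
        · have h2 := conv x x' y hx h h1.le
          exact s.iseqv.trans (s.iseqv.trans (s.iseqv.symm hx) (s.iseqv.symm h2)) hy
      · exact s.iseqv.trans (s.iseqv.trans (s.iseqv.symm hx) h) hy
  let le' : Quotient s → Quotient s → Prop :=
    Quotient.lift₂ (fun x y => x ≤ y ∨ s.r x y) (by
      intro x y x' y' hx hy
      simp only [eq_iff_iff]
      exact ⟨key _ _ _ _ hx hy, key _ _ _ _ (s.iseqv.symm hx) (s.iseqv.symm hy)⟩)
  letI li : LinearOrder (Quotient s) :=
    { le := le'
      le_refl := by rintro ⟨x⟩; exact Or.inl le_rfl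
      le_trans := by
        rintro ⟨x⟩ ⟨y⟩ ⟨z⟩ h1 h2
        rcases h1 with h1 | h1 <;> rcases h2 with h2 | h2
        · exact Or.inl (le_trans h1 h2)
        · rcases le_or_gt x z with h3 | h3
          · exact Or.inl h3
          · exact Or.inr (conv z y x (s.iseqv.symm h2) h3.le h1)
        · rcases le_or_gt x z with h3 | h3
          · exact Or.inl h3
          · exact Or.inr (s.iseqv.trans h1 (s.iseqv.symm (conv y x z (s.iseqv.symm h1) h2 h3.le)))
        · exact Or.inr (s.iseqv.trans h1 h2)
      le_antisymm := by
        rintro ⟨x⟩ ⟨y⟩ h1 h2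
        rcases h1 with h1 | h1
        · rcases h2 with h2 | h2
          · exact congrArg _ (le_antisymm h1 h2)
          · exact (Quotient.sound (s.iseqv.symm h2))
        · exact Quotient.sound h1
      le_total := by
        rintro ⟨x⟩ ⟨y⟩
        rcases le_total x y with h | h
        · exact Or.inl (Or.inl h)
        · exact Or.inr (Or.inl h)
      toDecidableLE := fun _ _ => Classical.dec _ }
  have sec : ∀ (a : X) (c : Quotient s), le' c (Quotient.mk s a) →
      ∃ x : X, x ≤ a ∧ Quotient.mk s x = c := by
    intro a c hc
    obtain ⟨x, rfl⟩ := Quotient.exists_rep c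
    rcases hc with h | h
    · exact ⟨x, h, rfl⟩
    · exact ⟨a, le_rfl, Quotient.sound (s.iseqv.symm h)⟩
  refine ⟨li, fun a b h => Or.inl h, inferInstance, ?_⟩
  rintro ⟨a⟩ ⟨b⟩
  obtain ⟨f⟩ := hX a b
  -- section of the quotient map on Iic a
  let ψ : Set.Iic (Quotient.mk s a) → Set.Iic a := fun c =>
    ⟨(sec a c.1 c.2).choose, (sec a c.1 c.2).choose_spec.1⟩
  have hψ : ∀ c, Quotient.mk s ((ψ c : Set.Iic a) : X) = c.1 := fun c =>
    (sec a c.1 c.2).choose_spec.2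
  let g : Set.Iic (Quotient.mk s a) → Set.Iic (Quotient.mk s b) := fun c =>
    ⟨Quotient.mk s ((f (ψ c) : Set.Iic b) : X), Or.inl (f (ψ c)).2⟩
  have gmono : Monotone g := by
    intro c d hcd
    have h1 : le' (Quotient.mk s (ψ c : X)) (Quotient.mk s (ψ d : X)) := by
      rw [hψ c, hψ d]; exact hcd
    have h2 : ((ψ c : X) ≤ (ψ d : X)) ∨ s.r (ψ c : X) (ψ d : X) := h1
    rcases h2 with h2 | h2
    · exact Or.inl (Subtype.coe_le_coe.mpr (f.monotone (Subtype.coe_le_coe.mp h2)))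
    · exact Or.inr ((inv a b f (ψ c) (ψ d)).mp h2)
  have ginj : Function.Injective g := by
    intro c d hcd
    have h1 : s.r ((f (ψ c) : Set.Iic b) : X) ((f (ψ d) : Set.Iic b) : X) :=
      Quotient.exact (congrArg Subtype.val hcd)
    have h2 : s.r (ψ c : X) (ψ d : X) := (inv a b f (ψ c) (ψ d)).mpr h1
    have h3 : c.1 = d.1 := by
      rw [← hψ c, ← hψ d]; exact Quotient.sound h2
    exact Subtype.ext h3
  have gsurj : Function.Surjective g := by
    rintro ⟨e, he⟩
    obtain ⟨y, hy, rfl⟩ := sec b e he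
    refine ⟨⟨Quotient.mk s ((f.symm ⟨y, hy⟩ : Set.Iic a) : X), Or.inl (f.symm ⟨y, hy⟩).2⟩, ?_⟩
    apply Subtype.ext
    show Quotient.mk s ((f (ψ _) : Set.Iic b) : X) = Quotient.mk s y
    apply Quotient.sound
    have h1 : s.r ((ψ ⟨Quotient.mk s ((f.symm ⟨y, hy⟩ : Set.Iic a) : X),
        Or.inl (f.symm ⟨y, hy⟩).2⟩ : Set.Iic a) : X) ((f.symm ⟨y, hy⟩ : Set.Iic a) : X) :=
      Quotient.exact (hψ ⟨Quotient.mk s ((f.symm ⟨y, hy⟩ : Set.Iic a) : X),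
        Or.inl (f.symm ⟨y, hy⟩).2⟩)
    have h2 := (inv a b f _ _).mp h1
    rwa [f.apply_symm_apply] at h2
  exact ⟨(gmono.strictMono_of_injective ginj).orderIsoOfSurjective _ gsurj⟩
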